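/- Let G be a finite group of order 2n with n ≥ 2 and S a generating set such that the undirected Cayley graph Γ(G,S) is complete bipartite (i.e., there is an index-2 subgroup H with S = G \ H). Then Player 2 has a winning strategy for REL(G,S). -/

import Mathlib

namespace RelatorGames

variable {G : Type*} [Group G]

/-- The letters available in the relator games: elements of `S` and their inverses. -/
def letters (S : Set G) : Set G := S ∪ (fun g => g⁻¹) '' S

/-- Evaluate a history of moves (most recent letter first) to a group element:
the group element represented by the word built so far. -/
def eval (h : List G) : G := h.reverse.prod

/-- A move `m` is legal after history `h`: it is a letter of `S ∪ S⁻¹` and it is not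
the inverse of the immediately preceding letter (no backtracking). -/
def LegalMove (S : Set G) (h : List G) (m : G) : Prop :=
  m ∈ letters S ∧ ∀ p ∈ h.head?, m ≠ p⁻¹

/-- Appending `m` to the history `h` produces a word equal in `G` to some earlier
prefix of the word (equivalently, the walk in the Cayley graph revisits a vertex). -/
def ClosesCycle (h : List G) (m : G) : Prop :=
  ∃ t, t <:+ h ∧ eval t = eval (m :: h)

/-- A strategy: a choice of next letter given the history (most recent letter first). -/
abbrev Strategy (G : Type*) := List G → G

/-- The sequence of histories arising when the first player (moving at even steps)
uses `σ` and the second player (moving at odd steps) uses `τ`. -/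
def hist (σ τ : Strategy G) : ℕ → List G
  | 0 => []
  | k + 1 =>
      (if k % 2 = 0 then σ (hist σ τ k) else τ (hist σ τ k)) :: hist σ τ k

/-- The move made at step `k` in the play of `σ` against `τ`. -/
def moveAt (σ τ : Strategy G) (k : ℕ) : G :=
  if k % 2 = 0 then σ (hist σ τ k) else τ (hist σ τ k)

/-- Step `j` is uneventful: the move made is legal and does not close a cycle. -/
def Ok (S : Set G) (σ τ : Strategy G) (j : ℕ) : Prop :=
  LegalMove S (hist σ τ j) (moveAt σ τ j) ∧ ¬ ClosesCycle (hist σ τ j) (moveAt σ τ j)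

/-- In the play of `σ` against `τ`, the player moving at steps congruent to `p` mod 2
wins the relator achievement game `REL(G,S)`: at the first eventful step, either it is
that player's turn and they legally close a cycle, or it is the opponent's turn and the
opponent has made an illegal move (in particular, has no legal move). -/
def RelWins (S : Set G) (p : ℕ) (σ τ : Strategy G) : Prop :=
  ∃ k : ℕ, (∀ j < k, Ok S σ τ j) ∧
    ((k % 2 = p ∧ LegalMove S (hist σ τ k) (moveAt σ τ k) ∧
        ClosesCycle (hist σ τ k) (moveAt σ τ k)) ∨
      (k % 2 ≠ p ∧ ¬ LegalMove S (hist σ τ k) (moveAt σ τ k)))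

/-- In the play of `σ` against `τ`, the player moving at steps congruent to `p` mod 2
wins the relator avoidance game `RAV(G,S)`: at the first eventful step it is the
opponent's turn, and the opponent either makes an illegal move (in particular, has no
legal move) or closes a cycle. -/
def RavWins (S : Set G) (p : ℕ) (σ τ : Strategy G) : Prop :=
  ∃ k : ℕ, (∀ j < k, Ok S σ τ j) ∧ k % 2 ≠ p ∧
    (¬ LegalMove S (hist σ τ k) (moveAt σ τ k) ∨ ClosesCycle (hist σ τ k) (moveAt σ τ k))

/-- Player 1 has a winning strategy for `REL(G,S)`. -/
def FirstWinsREL (S : Set G) : Prop :=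
  ∃ σ : Strategy G, ∀ τ : Strategy G, RelWins S 0 σ τ

/-- Player 2 has a winning strategy for `REL(G,S)`. -/
def SecondWinsREL (S : Set G) : Prop :=
  ∃ τ : Strategy G, ∀ σ : Strategy G, RelWins S 1 σ τ

/-- Player 1 has a winning strategy for `RAV(G,S)`. -/
def FirstWinsRAV (S : Set G) : Prop :=
  ∃ σ : Strategy G, ∀ τ : Strategy G, RavWins S 0 σ τ

/-- Player 2 has a winning strategy for `RAV(G,S)`. -/
def SecondWinsRAV (S : Set G) : Prop :=
  ∃ τ : Strategy G, ∀ σ : Strategy G, RavWins S 1 σ τ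

end RelatorGames


namespace RelatorGames

lemma eval_cons' {G : Type*} [Group G] (m : G) (h : List G) :
    eval (m :: h) = eval h * m := by
  simp [eval]

lemma eval_nil' {G : Type*} [Group G] : eval ([] : List G) = 1 := rfl

end RelatorGames

open RelatorGames in
/-- If `G` has order `2n` with `n ≥ 2` and `S = G \\ H` for an index-2
subgroup `H` (so the Cayley graph is complete bipartite), then Player 2 wins
`REL(G,S)`. -/
theorem rel_complete_bipartite_second_wins {G : Type*} [Group G] [Fintype G]
    (n : ℕ) (hn : 2 ≤ n) (hcard : Fintype.card G = 2 * n)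
    (S : Set G) (hgen : Subgroup.closure S = ⊤)
    (H : Subgroup G) (hH : H.index = 2) (hS : S = {g : G | g ∉ H}) :
    SecondWinsREL S := by
  classical
  -- every letter lies outside `H`
  have hmem : ∀ g : G, g ∈ letters S ↔ g ∉ H := by
    intro g
    constructor
    · rintro (hg | ⟨y, hy, rfl⟩)
      · rw [hS] at hg; exact hg
      · rw [hS] at hy
        simpa [H.inv_mem_iff] using hy
    · intro hg
      exact Or.inl (by rw [hS]; exact hg)
  -- a nontrivial element of H
  have hHcard : Nat.card H = n := by
    have h1 := Subgroup.card_mul_index H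
    have h2 : Nat.card G = 2 * n := by rw [Nat.card_eq_fintype_card, hcard]
    rw [hH, h2] at h1
    omega
  have hnt : Nontrivial H := by
    rw [← Finite.one_lt_card_iff_nontrivial, hHcard]; omega
  obtain ⟨x, hx⟩ := exists_ne (1 : H)
  have hxH : (x : G) ∈ H := x.2
  have hxne : (x : G) ≠ 1 := fun h => hx (Subtype.ext h)
  -- Player 2's strategy: move to a nontrivial element of H, then back to 1
  set τ : Strategy G := fun h => if h.length = 1 then (eval h)⁻¹ * x else (eval h)⁻¹ with hτ
  have hτone : ∀ h : List G, h.length = 1 → τ h = (eval h)⁻¹ * x := by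
    intro h hh; simp [hτ, hh]
  have hτodd : ∀ h : List G, h.length ≠ 1 → τ h = (eval h)⁻¹ := by
    intro h hh; simp [hτ, hh]
  refine ⟨τ, fun σ => ?_⟩
  have h0 : hist σ τ 0 = [] := rfl
  have hm0 : moveAt σ τ 0 = σ [] := by simp [moveAt, h0]
  by_cases hL0 : LegalMove S [] (σ [])
  · -- Player 1's first move is legal
    set m0 := σ [] with hm0def
    have hm0H : m0 ∉ H := (hmem m0).1 hL0.1
    have h1 : hist σ τ 1 = [m0] := by simp [hist, hm0def]
    have hm1 : moveAt σ τ 1 = m0⁻¹ * x := by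
      have h' : moveAt σ τ 1 = τ (hist σ τ 1) := by simp [moveAt]
      rw [h', h1, hτone [m0] rfl]
      simp [eval]
    have h2 : hist σ τ 2 = [m0⁻¹ * x, m0] := by
      have h' : hist σ τ 2 = moveAt σ τ 1 :: hist σ τ 1 := by simp [hist, moveAt]
      rw [h', hm1, h1]
    have ok0 : Ok S σ τ 0 := by
      refine ⟨by rwa [h0, hm0], ?_⟩
      rw [h0, hm0]
      rintro ⟨t, ht, heq⟩
      rw [List.suffix_nil] at ht
      subst ht
      rw [eval_nil', eval_cons', eval_nil', one_mul] at heq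
      exact hm0H (heq ▸ H.one_mem)
    have hm1H : m0⁻¹ * x ∉ H := by
      intro hmm
      have h' : (m0⁻¹ * x) * x⁻¹ ∈ H := H.mul_mem hmm (H.inv_mem hxH)
      simp only [Subgroup.coe_inv, mul_inv_cancel_right] at h'
      exact hm0H (by simpa using H.inv_mem h')
    have ok1 : Ok S σ τ 1 := by
      constructor
      · rw [h1, hm1]
        refine ⟨(hmem _).2 hm1H, ?_⟩
        intro p hp
        simp only [List.head?_cons, Option.mem_def, Option.some.injEq] at hp
        subst hp
        intro hcontra
        exact hxne (mul_eq_left.mp hcontra)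
      · rw [h1, hm1]
        rintro ⟨t, ht, heq⟩
        have heval : eval ((m0⁻¹ * x) :: [m0]) = x := by
          rw [eval_cons', eval_cons', eval_nil', one_mul]
          group
        rw [heval] at heq
        rw [List.suffix_cons_iff] at ht
        rcases ht with rfl | ht
        · rw [eval_cons', eval_nil', one_mul] at heq
          exact hm0H (heq ▸ hxH)
        · rw [List.suffix_nil] at ht
          subst ht
          rw [eval_nil'] at heq
          exact hxne heq.symm
    set m2 := σ (hist σ τ 2) with hm2def
    have hmm2 : moveAt σ τ 2 = m2 := by simp [moveAt, hm2def]
    by_cases hL2 : LegalMove S (hist σ τ 2) m2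
    · -- Player 1's second move is legal; Player 2 closes a cycle at step 3
      have hm2H : m2 ∉ H := (hmem m2).1 hL2.1
      have hnb2 : m2 ≠ (m0⁻¹ * x)⁻¹ := hL2.2 (m0⁻¹ * x) (by rw [h2]; rfl)
      have h3 : hist σ τ 3 = [m2, m0⁻¹ * x, m0] := by
        have h' : hist σ τ 3 = moveAt σ τ 2 :: hist σ τ 2 := by simp [hist, moveAt]
        rw [h', hmm2, h2]
      have heval3 : eval ([m2, m0⁻¹ * x, m0]) = x * m2 := by
        rw [eval_cons', eval_cons', eval_cons', eval_nil', one_mul]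
        group
      have hxm2 : (x : G) * m2 ∉ H := fun hc => hm2H (by
        have h' := H.mul_mem (H.inv_mem hxH) hc
        simpa using h')
      have ok2 : Ok S σ τ 2 := by
        refine ⟨by rwa [hmm2], ?_⟩
        rw [hmm2, h2]
        rintro ⟨t, ht, heq⟩
        have h' : eval (m2 :: [m0⁻¹ * x, m0]) = x * m2 := heval3
        rw [h'] at heq
        rw [List.suffix_cons_iff] at ht
        rcases ht with rfl | ht
        · -- eval [m0⁻¹x, m0] = x, so x = x * m2, so m2 = 1 ∈ H
          rw [eval_cons', eval_cons', eval_nil', one_mul] at heq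
          have hm2one : m2 = 1 := by
            have : (x : G) = x * m2 := by rw [← heq]; group
            exact (mul_eq_left.mp this.symm)
          exact hm2H (hm2one ▸ H.one_mem)
        · rw [List.suffix_cons_iff] at ht
          rcases ht with rfl | ht
          · -- eval [m0] = m0 = x * m2 means m2 backtracks
            rw [eval_cons', eval_nil', one_mul] at heq
            apply hnb2
            rw [mul_inv_rev, inv_inv, heq]
            group
          · rw [List.suffix_nil] at ht
            subst ht
            rw [eval_nil'] at heq
            exact hxm2 (heq ▸ H.one_mem)
      have hm3 : moveAt σ τ 3 = (x * m2)⁻¹ := by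
        have h' : moveAt σ τ 3 = τ (hist σ τ 3) := by simp [moveAt]
        rw [h', hτodd (hist σ τ 3) (by rw [h3]; simp), h3, heval3]
      refine ⟨3, ?_, Or.inl ⟨by norm_num, ?_, ?_⟩⟩
      · intro j hj
        interval_cases j
        · exact ok0
        · exact ok1
        · exact ok2
      · rw [hm3]
        constructor
        · apply (hmem _).2
          exact fun hc => hxm2 (H.inv_mem_iff.mp hc)
        · intro p hp
          rw [h3] at hp
          simp only [List.head?_cons, Option.mem_def, Option.some.injEq] at hp
          subst hp
          intro hc
          exact hxne (mul_eq_right.mp (inv_injective hc))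
      · refine ⟨[], List.nil_suffix, ?_⟩
        rw [eval_nil', eval_cons', hm3, h3, heval3]
        group
    · -- Player 1's second move is illegal: Player 2 wins at step 2
      refine ⟨2, ?_, Or.inr ⟨by norm_num, by rwa [hmm2]⟩⟩
      intro j hj
      interval_cases j
      · exact ok0
      · exact ok1
  · -- Player 1's first move is illegal: Player 2 wins at step 0
    exact ⟨0, fun j hj => absurd hj (by omega), Or.inr ⟨by norm_num, by rwa [h0, hm0]⟩⟩
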